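/- Let A(t) = 1 − m(1−e^{−μt})/(N(N−1)) and define φ = Σ_{k≥0}(Nλ)^k A^{*k}*1, where * is Laplace convolution (A^{*0}*1 := 1). Then φ(t) = (−δ₋e^{(Nλ−δ₊)t} + δ₊e^{(Nλ−δ₋)t})/(δ₊−δ₋), where δ_± = (Nλ+μ)/2 ± (1/2)√((Nλ+μ)² − 4mλμ/(N−1)). -/

import Mathlib

set_option maxHeartbeats 1000000

open Real MeasureTheory

/-- Laplace convolution (f*g)(t) = ∫₀^t f(t−s)g(s) ds. -/
noncomputable def lapConv (f g : ℝ → ℝ) : ℝ → ℝ :=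
  fun t => ∫ s in (0:ℝ)..t, f (t - s) * g s

/-- Iterated Laplace convolution A^{*k} * 1, with A^{*0} * 1 := 1. -/
noncomputable def iterConv (A : ℝ → ℝ) : ℕ → ℝ → ℝ
  | 0 => fun _ => 1
  | k + 1 => lapConv A (iterConv A k)

lemma integral_exp_lin (γ t : ℝ) (hγ : γ ≠ 0) :
    ∫ s in (0:ℝ)..t, Real.exp (γ * s) = (Real.exp (γ * t) - 1) / γ := by
  have h : ∀ s ∈ Set.uIcc (0:ℝ) t,
      HasDerivAt (fun u => Real.exp (γ * u) / γ) (Real.exp (γ * s)) s := by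
    intro s _
    have h1 : HasDerivAt (fun u : ℝ => γ * u) γ s := by
      simpa using (hasDerivAt_id s).const_mul γ
    have h2 := (Real.hasDerivAt_exp (γ * s)).comp s h1
    have h3 := h2.div_const γ
    simpa [mul_div_cancel_right₀ _ hγ] using h3
  rw [intervalIntegral.integral_eq_sub_of_hasDerivAt h
    ((Real.continuous_exp.comp (continuous_const.mul continuous_id)).intervalIntegrable 0 t)]
  simp [Real.exp_zero]
  ring


lemma conv_identity (L dp dm mu c t : ℝ) (hL : L ≠ 0) (hdp : dp ≠ 0) (hdm : dm ≠ 0)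
    (hD : dp - dm ≠ 0) (ha : L - dp ≠ 0) (hb : L - dm ≠ 0) (hmu : mu ≠ 0)
    (h1 : dp + dm = L + mu) (h2 : dp * dm = L * mu * c) :
    (-dm * Real.exp ((L - dp) * t) + dp * Real.exp ((L - dm) * t)) / (dp - dm)
      = 1 + L * ∫ s in (0:ℝ)..t,
          ((1 - c) + c * Real.exp (-mu * (t - s)))
            * ((-dm * Real.exp ((L - dp) * s) + dp * Real.exp ((L - dm) * s)) / (dp - dm)) := by
  have hmu' : mu = dp + dm - L := by linarith
  subst hmu'
  have hc : c = dp * dm / (L * (dp + dm - L)) := by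
    field_simp
    linarith [h2]
  subst hc
  set cc : ℝ := dp * dm / (L * (dp + dm - L)) with hcc
  set z : ℝ := Real.exp (-(dp + dm - L) * t) with hz
  have hz0 : z ≠ 0 := Real.exp_ne_zero _
  set C1 : ℝ := (1 - cc) * (-dm) / (dp - dm) with hC1
  set C2 : ℝ := (1 - cc) * dp / (dp - dm) with hC2
  set C3 : ℝ := cc * z * (-dm) / (dp - dm) with hC3
  set C4 : ℝ := cc * z * dp / (dp - dm) with hC4
  have key : ∀ s : ℝ,
      ((1 - cc) + cc * Real.exp (-(dp + dm - L) * (t - s)))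
          * ((-dm * Real.exp ((L - dp) * s) + dp * Real.exp ((L - dm) * s)) / (dp - dm))
        = C1 * Real.exp ((L - dp) * s) + C2 * Real.exp ((L - dm) * s)
            + (C3 * Real.exp (dm * s) + C4 * Real.exp (dp * s)) := by
    intro s
    have e1 : -(dp + dm - L) * (t - s) = -(dp + dm - L) * t + (dp + dm - L) * s := by ring
    have m1 : Real.exp (dm * s) = Real.exp ((dp + dm - L) * s) * Real.exp ((L - dp) * s) := by
      rw [← Real.exp_add]; congr 1; ring
    have m2 : Real.exp (dp * s) = Real.exp ((dp + dm - L) * s) * Real.exp ((L - dm) * s) := by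
      rw [← Real.exp_add]; congr 1; ring
    rw [e1, Real.exp_add, m1, m2, hC1, hC2, hC3, hC4, ← hz]
    field_simp
  rw [intervalIntegral.integral_congr (g := fun s =>
      C1 * Real.exp ((L - dp) * s) + C2 * Real.exp ((L - dm) * s)
        + (C3 * Real.exp (dm * s) + C4 * Real.exp (dp * s))) (fun s _ => key s)]
  have i1 : ∀ (C γ : ℝ), IntervalIntegrable (fun s => C * Real.exp (γ * s)) volume 0 t := by
    intro C γ
    exact ((continuous_const.mul (Real.continuous_exp.comp
      (continuous_const.mul continuous_id))).intervalIntegrable 0 t)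
  rw [intervalIntegral.integral_add ((i1 C1 _).add (i1 C2 _)) ((i1 C3 _).add (i1 C4 _)),
    intervalIntegral.integral_add (i1 C1 _) (i1 C2 _),
    intervalIntegral.integral_add (i1 C3 _) (i1 C4 _),
    intervalIntegral.integral_const_mul, intervalIntegral.integral_const_mul,
    intervalIntegral.integral_const_mul, intervalIntegral.integral_const_mul,
    integral_exp_lin _ _ ha, integral_exp_lin _ _ hb,
    integral_exp_lin _ _ hdm, integral_exp_lin _ _ hdp]
  have r1 : Real.exp ((L - dp) * t) = z * Real.exp (dm * t) := by
    rw [hz, ← Real.exp_add]; congr 1; ring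
  have r2 : Real.exp ((L - dm) * t) = z * Real.exp (dp * t) := by
    rw [hz, ← Real.exp_add]; congr 1; ring
  rw [r1, r2, hC1, hC2, hC3, hC4, hcc]
  clear_value z
  field_simp
  ring

lemma lapConv_cont {f g : ℝ → ℝ} (hf : Continuous f) (hg : Continuous g) :
    Continuous (lapConv f g) := by
  have h : Continuous (Function.uncurry fun t s => f (t - s) * g s) :=
    (hf.comp (continuous_fst.sub continuous_snd)).mul (hg.comp continuous_snd)
  exact intervalIntegral.continuous_parametric_intervalIntegral_of_continuous h continuous_id


lemma iterConv_cont {A : ℝ → ℝ} (hA : Continuous A) (n : ℕ) :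
    Continuous (iterConv A n) := by
  induction n with
  | zero => exact continuous_const
  | succ n ih => exact lapConv_cont hA ih


lemma dyson_tsum (A F : ℝ → ℝ) (hA : Continuous A) (hAbd : ∀ u, 0 ≤ u → |A u| ≤ 1)
    (hF : Continuous F) (L : ℝ) (hL : 0 ≤ L)
    (hFeq : ∀ t, F t = 1 + L * lapConv A F t) (t : ℝ) (ht : 0 ≤ t) :
    (∑' k : ℕ, L ^ k * iterConv A k t) = F t := by
  classical
  -- the tail functions
  let G : ℕ → ℝ → ℝ := fun n => Nat.rec F (fun _ g => lapConv A g) n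
  have hG0 : G 0 = F := rfl
  have hGs : ∀ n, G (n + 1) = lapConv A (G n) := fun n => rfl
  have contG : ∀ n, Continuous (G n) := by
    intro n
    induction n with
    | zero => exact hF
    | succ n ih => exact lapConv_cont hA ih
  -- recursion
  have hrec : ∀ n, ∀ u : ℝ, G n u = iterConv A n u + L * G (n + 1) u := by
    intro n
    induction n with
    | zero =>
      intro u
      simpa [iterConv, hG0, hGs] using hFeq u
    | succ n ih =>
      intro u
      have hcongr : ∀ s : ℝ, A (u - s) * G n s
          = A (u - s) * iterConv A n s + L * (A (u - s) * G (n + 1) s) := by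
        intro s; rw [ih s]; ring
      have iInt : IntervalIntegrable (fun s => A (u - s) * iterConv A n s) volume 0 u :=
        ((hA.comp (continuous_const.sub continuous_id)).mul (iterConv_cont hA n)).intervalIntegrable 0 u
      have gInt : IntervalIntegrable (fun s => L * (A (u - s) * G (n + 1) s)) volume 0 u :=
        (continuous_const.mul ((hA.comp (continuous_const.sub continuous_id)).mul
          (contG (n + 1)))).intervalIntegrable 0 u
      calc G (n + 1) u = ∫ s in (0:ℝ)..u, A (u - s) * G n s := rfl
        _ = ∫ s in (0:ℝ)..u, (A (u - s) * iterConv A n s + L * (A (u - s) * G (n + 1) s)) :=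
            intervalIntegral.integral_congr (fun s _ => hcongr s)
        _ = (∫ s in (0:ℝ)..u, A (u - s) * iterConv A n s)
            + ∫ s in (0:ℝ)..u, L * (A (u - s) * G (n + 1) s) :=
            intervalIntegral.integral_add iInt gInt
        _ = iterConv A (n + 1) u + L * G (n + 2) u := by
            rw [intervalIntegral.integral_const_mul]; rfl
  -- telescope
  have tel : ∀ n, F t = (∑ k ∈ Finset.range n, L ^ k * iterConv A k t) + L ^ n * G n t := by
    intro n
    induction n with
    | zero => simp [hG0]
    | succ n ih =>
      rw [ih, hrec n t, Finset.sum_range_succ]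
      ring
  -- bound on iterConv
  have iterBd : ∀ n, ∀ s : ℝ, 0 ≤ s → |iterConv A n s| ≤ s ^ n / n.factorial := by
    intro n
    induction n with
    | zero => intro s hs; simp [iterConv]
    | succ n ih =>
      intro s hs
      have hInt1 : IntervalIntegrable (fun u => |A (s - u) * iterConv A n u|) volume 0 s :=
        (((hA.comp (continuous_const.sub continuous_id)).mul (iterConv_cont hA n)).abs).intervalIntegrable 0 s
      have hInt2 : IntervalIntegrable (fun u : ℝ => u ^ n / n.factorial) volume 0 s :=
        ((continuous_pow n).div_const _).intervalIntegrable 0 s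
      have hle : ∀ u ∈ Set.Icc (0:ℝ) s, |A (s - u) * iterConv A n u| ≤ u ^ n / n.factorial := by
        intro u hu
        rw [abs_mul]
        calc |A (s - u)| * |iterConv A n u| ≤ 1 * (u ^ n / n.factorial) := by
              apply mul_le_mul (hAbd _ (by linarith [hu.1, hu.2])) (ih u hu.1)
                (abs_nonneg _) zero_le_one
          _ = u ^ n / n.factorial := one_mul _
      calc |iterConv A (n + 1) s| = |∫ u in (0:ℝ)..s, A (s - u) * iterConv A n u| := rfl
        _ ≤ ∫ u in (0:ℝ)..s, |A (s - u) * iterConv A n u| := by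
            simpa only [Real.norm_eq_abs] using intervalIntegral.norm_integral_le_integral_norm
              (f := fun u => A (s - u) * iterConv A n u) (μ := volume) hs
        _ ≤ ∫ u in (0:ℝ)..s, u ^ n / n.factorial :=
            intervalIntegral.integral_mono_on hs hInt1 hInt2 hle
        _ = s ^ (n + 1) / (n + 1).factorial := by
            rw [intervalIntegral.integral_div, integral_pow]
            rw [Nat.factorial_succ]
            have hf : ((n.factorial : ℝ)) ≠ 0 := by positivity
            have h0 : ((n:ℝ) + 1) ≠ 0 := by positivity
            push_cast
            rw [zero_pow (by omega), sub_zero]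
            field_simp
  -- bound on F on [0,t]
  obtain ⟨M, hM⟩ := (isCompact_Icc : IsCompact (Set.Icc (0:ℝ) t)).exists_bound_of_continuousOn
    hF.continuousOn
  -- bound on G
  have GBd : ∀ n, ∀ s : ℝ, s ∈ Set.Icc (0:ℝ) t → |G n s| ≤ M * s ^ n / n.factorial := by
    intro n
    induction n with
    | zero => intro s hs; simpa [hG0] using hM s hs
    | succ n ih =>
      intro s hs
      have hs0 : (0:ℝ) ≤ s := hs.1
      have hInt1 : IntervalIntegrable (fun u => |A (s - u) * G n u|) volume 0 s :=
        (((hA.comp (continuous_const.sub continuous_id)).mul (contG n)).abs).intervalIntegrable 0 s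
      have hInt2 : IntervalIntegrable (fun u : ℝ => M * u ^ n / n.factorial) volume 0 s :=
        (((continuous_const.mul (continuous_pow n)).div_const _)).intervalIntegrable 0 s
      have hle : ∀ u ∈ Set.Icc (0:ℝ) s, |A (s - u) * G n u| ≤ M * u ^ n / n.factorial := by
        intro u hu
        rw [abs_mul]
        calc |A (s - u)| * |G n u| ≤ 1 * (M * u ^ n / n.factorial) := by
              apply mul_le_mul (hAbd _ (by linarith [hu.1, hu.2]))
                (ih u ⟨hu.1, le_trans hu.2 hs.2⟩) (abs_nonneg _) zero_le_one
          _ = M * u ^ n / n.factorial := one_mul _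
      calc |G (n + 1) s| = |∫ u in (0:ℝ)..s, A (s - u) * G n u| := rfl
        _ ≤ ∫ u in (0:ℝ)..s, |A (s - u) * G n u| := by
            simpa only [Real.norm_eq_abs] using intervalIntegral.norm_integral_le_integral_norm
              (f := fun u => A (s - u) * G n u) (μ := volume) hs0
        _ ≤ ∫ u in (0:ℝ)..s, M * u ^ n / n.factorial :=
            intervalIntegral.integral_mono_on hs0 hInt1 hInt2 hle
        _ = M * s ^ (n + 1) / (n + 1).factorial := by
            have heq : ∀ u : ℝ, M * u ^ n / n.factorial = M / n.factorial * u ^ n := by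
              intro u; ring
            simp_rw [heq]
            rw [intervalIntegral.integral_const_mul, integral_pow]
            rw [Nat.factorial_succ]
            have hf : ((n.factorial : ℝ)) ≠ 0 := by positivity
            have h0 : ((n:ℝ) + 1) ≠ 0 := by positivity
            push_cast
            rw [zero_pow (by omega), sub_zero]
            rw [div_mul_div_comm]
            rw [mul_comm ((n.factorial : ℝ)) ((n:ℝ) + 1)]
  -- limit of the remainder
  have hM0 : 0 ≤ M := le_trans (abs_nonneg _) (hM 0 ⟨le_refl _, ht⟩)
  have hlim : Filter.Tendsto (fun n => L ^ n * G n t) Filter.atTop (nhds 0) := by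
    apply squeeze_zero_norm (a := fun n => M * ((L * t) ^ n / n.factorial))
    · intro n
      have := GBd n t ⟨ht, le_refl _⟩
      calc ‖L ^ n * G n t‖ = L ^ n * |G n t| := by
            rw [norm_mul, norm_pow, Real.norm_eq_abs, Real.norm_eq_abs, abs_of_nonneg hL]
        _ ≤ L ^ n * (M * t ^ n / n.factorial) :=
            mul_le_mul_of_nonneg_left this (pow_nonneg hL n)
        _ = M * ((L * t) ^ n / n.factorial) := by rw [mul_pow]; ring
    · have := (FloorSemiring.tendsto_pow_div_factorial_atTop (L * t)).const_mul M
      simpa using this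
  -- summability
  have hsummable : Summable (fun k => L ^ k * iterConv A k t) := by
    apply Summable.of_norm_bounded (Real.summable_pow_div_factorial (L * t))
    intro k
    calc ‖L ^ k * iterConv A k t‖ = L ^ k * |iterConv A k t| := by
          rw [norm_mul, norm_pow, Real.norm_eq_abs, Real.norm_eq_abs, abs_of_nonneg hL]
      _ ≤ L ^ k * (t ^ k / k.factorial) :=
          mul_le_mul_of_nonneg_left (iterBd k t ht) (pow_nonneg hL k)
      _ = (L * t) ^ k / k.factorial := by rw [mul_pow]; ring
  -- conclude
  have h1 := hsummable.hasSum.tendsto_sum_nat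
  have h2 : Filter.Tendsto (fun n => ∑ k ∈ Finset.range n, L ^ k * iterConv A k t)
      Filter.atTop (nhds (F t)) := by
    have : (fun n => ∑ k ∈ Finset.range n, L ^ k * iterConv A k t)
        = fun n => F t - L ^ n * G n t := by
      funext n; rw [tel n]; ring
    rw [this]
    simpa using Filter.Tendsto.sub (tendsto_const_nhds (x := F t)) hlim
  exact tendsto_nhds_unique h1 h2

/-- With A(t) = 1 − m(1−e^{−μt})/(N(N−1)), the Dyson-series function
φ = Σ_k (Nλ)^k A^{*k}*1 equals (−δ₋e^{(Nλ−δ₊)t} + δ₊e^{(Nλ−δ₋)t})/(δ₊−δ₋), where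
δ_± = (Nλ+μ)/2 ± (1/2)√((Nλ+μ)² − 4mλμ/(N−1)). -/
theorem dyson_series_phi_formula (N m : ℕ) (hN : 2 ≤ N) (hm1 : 1 ≤ m) (hmN : m < N)
    (lam mu : ℝ) (hlam : 0 < lam) (hmu : 0 < mu) (t : ℝ) (ht : 0 ≤ t) :
    let A : ℝ → ℝ := fun s => 1 - m * (1 - Real.exp (-mu * s)) / (N * (N - 1 : ℝ))
    let dp : ℝ := (N * lam + mu) / 2
      + Real.sqrt ((N * lam + mu) ^ 2 - 4 * m * lam * mu / (N - 1 : ℝ)) / 2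
    let dm : ℝ := (N * lam + mu) / 2
      - Real.sqrt ((N * lam + mu) ^ 2 - 4 * m * lam * mu / (N - 1 : ℝ)) / 2
    (∑' k : ℕ, (N * lam) ^ k * iterConv A k t)
      = (-dm * Real.exp ((N * lam - dp) * t) + dp * Real.exp ((N * lam - dm) * t))
          / (dp - dm) := by
  intro A dp dm
  have hA : A = fun s => 1 - m * (1 - Real.exp (-mu * s)) / (N * (N - 1 : ℝ)) := rfl
  have hdp : dp = ((N:ℝ) * lam + mu) / 2
      + Real.sqrt (((N:ℝ) * lam + mu) ^ 2 - 4 * m * lam * mu / ((N:ℝ) - 1)) / 2 := rfl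
  have hdm : dm = ((N:ℝ) * lam + mu) / 2
      - Real.sqrt (((N:ℝ) * lam + mu) ^ 2 - 4 * m * lam * mu / ((N:ℝ) - 1)) / 2 := rfl
  clear_value A dp dm
  set nn : ℝ := (N : ℝ) with hnn
  set mm : ℝ := (m : ℝ) with hmm
  have hnn2 : (2:ℝ) ≤ nn := by rw [hnn]; exact_mod_cast hN
  have hmm1 : (1:ℝ) ≤ mm := by rw [hmm]; exact_mod_cast hm1
  have hmN' : mm + 1 ≤ nn := by rw [hmm, hnn]; exact_mod_cast Nat.succ_le_of_lt hmN
  have hnn0 : (0:ℝ) < nn := by linarith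
  have hnn1 : (0:ℝ) < nn - 1 := by linarith
  set c : ℝ := mm / (nn * (nn - 1)) with hc
  have hc0 : 0 < c := by rw [hc]; positivity
  have hc1 : c < 1 := by
    rw [hc, div_lt_one (by positivity)]
    nlinarith
  set L : ℝ := nn * lam with hL
  have hL0 : 0 < L := by rw [hL]; positivity
  set disc : ℝ := (nn * lam + mu) ^ 2 - 4 * mm * lam * mu / (nn - 1) with hdisc
  have hdisc_eq : disc = (nn * lam - mu) ^ 2 + 4 * nn * lam * mu * (1 - c) := by
    rw [hdisc, hc]
    field_simp
    ring
  have hdisc0 : 0 < disc := by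
    rw [hdisc_eq]
    have h4 : 0 < 4 * nn * lam * mu * (1 - c) := by
      apply mul_pos (by positivity) (by linarith)
    nlinarith [sq_nonneg (nn * lam - mu)]
  set sq : ℝ := Real.sqrt disc with hsq
  have hsq0 : 0 < sq := by rw [hsq]; exact Real.sqrt_pos.mpr hdisc0
  have hsq2 : sq ^ 2 = disc := by rw [hsq]; exact Real.sq_sqrt hdisc0.le
  have hdp' : dp = (nn * lam + mu) / 2 + sq / 2 := hdp
  have hdm' : dm = (nn * lam + mu) / 2 - sq / 2 := hdm
  clear_value nn mm c L disc sq
  have h1 : dp + dm = L + mu := by rw [hdp', hdm', hL]; ring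
  have h2 : dp * dm = L * mu * c := by
    have e : dp * dm = ((nn * lam + mu) ^ 2 - sq ^ 2) / 4 := by rw [hdp', hdm']; ring
    rw [e, hsq2, hdisc, hL, hc]
    field_simp
    ring
  have hdp0 : 0 < dp := by rw [hdp']; positivity
  have hdm0 : 0 < dm := by
    have hpos : 0 < dp * dm := by rw [h2]; positivity
    nlinarith
  have hDpos : dm < dp := by rw [hdp', hdm']; linarith
  have hD : dp - dm ≠ 0 := by linarith
  have hprod : (L - dp) * (L - dm) = -(L * mu * (1 - c)) := by
    linear_combination h2 - L * h1
  have hprodneg : (L - dp) * (L - dm) < 0 := by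
    rw [hprod]
    have : 0 < L * mu * (1 - c) := by apply mul_pos (by positivity) (by linarith)
    linarith
  have halpha : L - dp < 0 := by
    by_contra h
    push_neg at h
    have h' : 0 ≤ (L - dp) * (L - dm) := mul_nonneg h (by linarith)
    linarith
  have hbeta : 0 < L - dm := by
    by_contra h
    push_neg at h
    have h' : 0 ≤ (L - dp) * (L - dm) := by
      have := mul_nonneg (neg_nonneg.mpr halpha.le) (neg_nonneg.mpr h)
      nlinarith [this]
    linarith
  have hAeq : ∀ s : ℝ, A s = (1 - c) + c * Real.exp (-mu * s) := by
    intro s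
    simp only [hA]
    rw [hc]
    field_simp
    ring
  have hAcont : Continuous A := by rw [hA]; fun_prop
  have hAbd : ∀ u : ℝ, 0 ≤ u → |A u| ≤ 1 := by
    intro u hu
    rw [hAeq u]
    have he1 : Real.exp (-mu * u) ≤ 1 := by
      rw [Real.exp_le_one_iff]
      nlinarith
    have he0 : 0 < Real.exp (-mu * u) := Real.exp_pos _
    rw [abs_le]
    constructor <;> nlinarith
  have hFeq : ∀ u : ℝ,
      (-dm * Real.exp ((L - dp) * u) + dp * Real.exp ((L - dm) * u)) / (dp - dm)
        = 1 + L * lapConv A (fun s =>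
            (-dm * Real.exp ((L - dp) * s) + dp * Real.exp ((L - dm) * s)) / (dp - dm)) u := by
    intro u
    have hlap : lapConv A (fun s =>
        (-dm * Real.exp ((L - dp) * s) + dp * Real.exp ((L - dm) * s)) / (dp - dm)) u
        = ∫ s in (0:ℝ)..u,
        ((1 - c) + c * Real.exp (-mu * (u - s)))
          * ((-dm * Real.exp ((L - dp) * s) + dp * Real.exp ((L - dm) * s)) / (dp - dm)) := by
      apply intervalIntegral.integral_congr
      intro s _
      simp only []
      rw [hAeq (u - s)]
    rw [hlap]
    exact conv_identity L dp dm mu c u (ne_of_gt hL0) (ne_of_gt hdp0) (ne_of_gt hdm0)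
      hD (ne_of_lt halpha) (ne_of_gt hbeta) (ne_of_gt hmu) h1 h2
  have key := dyson_tsum A (fun s =>
      (-dm * Real.exp ((L - dp) * s) + dp * Real.exp ((L - dm) * s)) / (dp - dm))
    hAcont hAbd (by fun_prop) L hL0.le hFeq t ht
  exact key
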